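/- For every k with 1 ≤ k ≤ 5 there exist θ_k ∈ [0,1) and a symmetric positive definite matrix G = (g_{ij}) ∈ ℝ^{k×k} such that for every real inner product space with inner product (·,·) and all vectors v_0, …, v_k in it, (Σ_{i=0}^k δ_i v_{k−i}, v_k − θ_k v_{k−1}) ≥ Σ_{i,j=1}^k g_{ij} (v_i, v_j) − Σ_{i,j=1}^k g_{ij} (v_{i−1}, v_{j−1}), where δ_0, …, δ_k are the k-step BDF coefficients. -/

import Mathlib

open RealInnerProductSpace

set_option maxHeartbeats 4000000 in
theorem bdf_multiplier_energy_inequality (k : ℕ) (hk1 : 1 ≤ k) (hk5 : k ≤ 5)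
    (δc : ℕ → ℝ)
    (hδ : ∀ ζ : ℂ, ∑ j ∈ Finset.range (k + 1), (δc j : ℂ) * ζ ^ j
        = ∑ ℓ ∈ Finset.Icc 1 k, ((ℓ : ℂ))⁻¹ * (1 - ζ) ^ ℓ) :
    ∃ θ : ℝ, 0 ≤ θ ∧ θ < 1 ∧
      ∃ G : Matrix (Fin k) (Fin k) ℝ, G.IsSymm ∧ G.PosDef ∧
        ∀ (E : Type*) [NormedAddCommGroup E] [InnerProductSpace ℝ E] (v : ℕ → E),
          (∑ i : Fin k, ∑ j : Fin k, G i j * ⟪v ((i : ℕ) + 1), v ((j : ℕ) + 1)⟫)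
            - (∑ i : Fin k, ∑ j : Fin k, G i j * ⟪v (i : ℕ), v (j : ℕ)⟫)
          ≤ ⟪∑ i ∈ Finset.range (k + 1), δc i • v (k - i), v k - θ • v (k - 1)⟫ := by
  interval_cases k
  · -- k = 1
    have e0 := hδ 0
    have e1 := hδ 1
    norm_num [Finset.sum_range_succ, Finset.sum_Icc_succ_top, Finset.Icc_self] at e0 e1
    have r0 : (δc 0 * 1 + δc 1 * 0 : ℝ) = 1 := by
      first
      | refine Complex.ofReal_inj.mp ?_; push_cast; linear_combination e0
      | linarith [e0]
    have r1 : (δc 0 * 1 + δc 1 * 1 : ℝ) = 0 := by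
      first
      | refine Complex.ofReal_inj.mp ?_; push_cast; linear_combination e1
      | linarith [e1]
    have d0 : δc 0 = 1 := by linarith
    have d1 : δc 1 = -1 := by linarith
    refine ⟨0, by norm_num, by norm_num, Matrix.of ![![1/2]], ?_, ?_, ?_⟩
    · ext i j
      fin_cases i <;> fin_cases j <;> simp [Matrix.transpose_apply] <;> norm_num
    · refine Matrix.PosDef.of_dotProduct_mulVec_pos ?_ ?_
      · ext i j
        fin_cases i <;> fin_cases j <;> simp [Matrix.conjTranspose_apply] <;> norm_num
      · intro x hx
        have hq : dotProduct (star x) ((Matrix.of ![![1/2]]).mulVec x)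
            = (1/2 : ℝ) * (x 0)^2 := by
          simp [dotProduct, Matrix.mulVec, Fin.sum_univ_one]
          ring
        rw [hq]
        by_contra hle
        push_neg at hle
        have hy0 : x 0 = 0 := by nlinarith [sq_nonneg (x 0)]
        have hx0 : x 0 = 0 := by linarith
        exact hx (funext fun i => by fin_cases i <;> simp_all)
    · intro E _ _ v
      have h0 : (0:ℝ) ≤ ⟪(-1 : ℝ) • v 0 + (1 : ℝ) • v 1, (-1 : ℝ) • v 0 + (1 : ℝ) • v 1⟫ := real_inner_self_nonneg
      simp only [inner_add_left, inner_add_right, inner_sub_right, real_inner_smul_left,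
        real_inner_smul_right, Finset.sum_range_succ, Finset.sum_range_zero, zero_add,
        Fin.sum_univ_one, sum_inner, inner_zero_left] at h0 ⊢
      have cv0 : ((0 : Fin 1) : ℕ) = 0 := rfl
      norm_num [d0, d1, cv0, Matrix.cons_val] at h0 ⊢
      have s01 : ⟪v 1, v 0⟫ = ⟪v 0, v 1⟫ := real_inner_comm _ _
      linarith [h0]
  · -- k = 2
    have e0 := hδ 0
    have e1 := hδ 1
    have e2 := hδ 2
    norm_num [Finset.sum_range_succ, Finset.sum_Icc_succ_top, Finset.Icc_self] at e0 e1 e2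
    have r0 : (δc 0 * 1 + δc 1 * 0 + δc 2 * 0 : ℝ) = 3/2 := by
      first
      | refine Complex.ofReal_inj.mp ?_; push_cast; linear_combination e0
      | linarith [e0]
    have r1 : (δc 0 * 1 + δc 1 * 1 + δc 2 * 1 : ℝ) = 0 := by
      first
      | refine Complex.ofReal_inj.mp ?_; push_cast; linear_combination e1
      | linarith [e1]
    have r2 : (δc 0 * 1 + δc 1 * 2 + δc 2 * 4 : ℝ) = -1/2 := by
      first
      | refine Complex.ofReal_inj.mp ?_; push_cast; linear_combination e2
      | linarith [e2]
    have d0 : δc 0 = 3/2 := by linarith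
    have d1 : δc 1 = -2 := by linarith
    have d2 : δc 2 = 1/2 := by linarith
    refine ⟨1/4, by norm_num, by norm_num, Matrix.of ![![5/16, -1/2], ![-1/2, 17/16]], ?_, ?_, ?_⟩
    · ext i j
      fin_cases i <;> fin_cases j <;> simp [Matrix.transpose_apply] <;> norm_num
    · refine Matrix.PosDef.of_dotProduct_mulVec_pos ?_ ?_
      · ext i j
        fin_cases i <;> fin_cases j <;> simp [Matrix.conjTranspose_apply] <;> norm_num
      · intro x hx
        have hq : dotProduct (star x) ((Matrix.of ![![5/16, -1/2], ![-1/2, 17/16]]).mulVec x)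
            = (5/16 : ℝ) * (x 0 + (-8/5 : ℝ) * x 1)^2 + (21/80 : ℝ) * (x 1)^2 := by
          simp [dotProduct, Matrix.mulVec, Fin.sum_univ_two]
          ring
        rw [hq]
        by_contra hle
        push_neg at hle
        have hy1 : x 1 = 0 := by nlinarith [sq_nonneg (x 0 + (-8/5 : ℝ) * x 1), sq_nonneg (x 1)]
        have hx1 : x 1 = 0 := by linarith
        have hy0 : x 0 + (-8/5 : ℝ) * x 1 = 0 := by nlinarith [sq_nonneg (x 0 + (-8/5 : ℝ) * x 1), sq_nonneg (x 1)]
        have hx0 : x 0 = 0 := by linarith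
        exact hx (funext fun i => by fin_cases i <;> simp_all)
    · intro E _ _ v
      have h0 : (0:ℝ) ≤ ⟪(-1 : ℝ) • v 0 + (9/5 : ℝ) • v 1 + (-4/5 : ℝ) • v 2, (-1 : ℝ) • v 0 + (9/5 : ℝ) • v 1 + (-4/5 : ℝ) • v 2⟫ := real_inner_self_nonneg
      have h1 : (0:ℝ) ≤ ⟪(-1 : ℝ) • v 1 + (1 : ℝ) • v 2, (-1 : ℝ) • v 1 + (1 : ℝ) • v 2⟫ := real_inner_self_nonneg
      simp only [inner_add_left, inner_add_right, inner_sub_right, real_inner_smul_left,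
        real_inner_smul_right, Finset.sum_range_succ, Finset.sum_range_zero, zero_add,
        Fin.sum_univ_two, sum_inner, inner_zero_left] at h0 h1 ⊢
      have cv0 : ((0 : Fin 2) : ℕ) = 0 := rfl
      have cv1 : ((1 : Fin 2) : ℕ) = 1 := rfl
      norm_num [d0, d1, d2, cv0, cv1, Matrix.cons_val] at h0 h1 ⊢
      have s01 : ⟪v 1, v 0⟫ = ⟪v 0, v 1⟫ := real_inner_comm _ _
      have s02 : ⟪v 2, v 0⟫ = ⟪v 0, v 2⟫ := real_inner_comm _ _
      have s12 : ⟪v 2, v 1⟫ = ⟪v 1, v 2⟫ := real_inner_comm _ _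
      linarith [h0, h1]
  · -- k = 3
    have e0 := hδ 0
    have e1 := hδ 1
    have e2 := hδ 2
    have e3 := hδ 3
    norm_num [Finset.sum_range_succ, Finset.sum_Icc_succ_top, Finset.Icc_self] at e0 e1 e2 e3
    have r0 : (δc 0 * 1 + δc 1 * 0 + δc 2 * 0 + δc 3 * 0 : ℝ) = 11/6 := by
      first
      | refine Complex.ofReal_inj.mp ?_; push_cast; linear_combination e0
      | linarith [e0]
    have r1 : (δc 0 * 1 + δc 1 * 1 + δc 2 * 1 + δc 3 * 1 : ℝ) = 0 := by
      first
      | refine Complex.ofReal_inj.mp ?_; push_cast; linear_combination e1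
      | linarith [e1]
    have r2 : (δc 0 * 1 + δc 1 * 2 + δc 2 * 4 + δc 3 * 8 : ℝ) = -5/6 := by
      first
      | refine Complex.ofReal_inj.mp ?_; push_cast; linear_combination e2
      | linarith [e2]
    have r3 : (δc 0 * 1 + δc 1 * 3 + δc 2 * 9 + δc 3 * 27 : ℝ) = -8/3 := by
      first
      | refine Complex.ofReal_inj.mp ?_; push_cast; linear_combination e3
      | linarith [e3]
    have d0 : δc 0 = 11/6 := by linarith
    have d1 : δc 1 = -3 := by linarith
    have d2 : δc 2 = 3/2 := by linarith
    have d3 : δc 3 = -1/3 := by linarith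
    refine ⟨1/2, by norm_num, by norm_num, Matrix.of ![![13/16, -5/4, 25/48], ![-5/4, 133/48, -29/16], ![25/48, -29/16, 7/4]], ?_, ?_, ?_⟩
    · ext i j
      fin_cases i <;> fin_cases j <;> simp [Matrix.transpose_apply] <;> norm_num
    · refine Matrix.PosDef.of_dotProduct_mulVec_pos ?_ ?_
      · ext i j
        fin_cases i <;> fin_cases j <;> simp [Matrix.conjTranspose_apply] <;> norm_num
      · intro x hx
        have hq : dotProduct (star x) ((Matrix.of ![![13/16, -5/4, 25/48], ![-5/4, 133/48, -29/16], ![25/48, -29/16, 7/4]]).mulVec x)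
            = (13/16 : ℝ) * (x 0 + (-20/13 : ℝ) * x 1 + (25/39 : ℝ) * x 2)^2 + (529/624 : ℝ) * (x 1 + (-631/529 : ℝ) * x 2)^2 + (1999/9522 : ℝ) * (x 2)^2 := by
          simp [dotProduct, Matrix.mulVec, Fin.sum_univ_three]
          ring
        rw [hq]
        by_contra hle
        push_neg at hle
        have hy2 : x 2 = 0 := by nlinarith [sq_nonneg (x 0 + (-20/13 : ℝ) * x 1 + (25/39 : ℝ) * x 2), sq_nonneg (x 1 + (-631/529 : ℝ) * x 2), sq_nonneg (x 2)]
        have hx2 : x 2 = 0 := by linarith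
        have hy1 : x 1 + (-631/529 : ℝ) * x 2 = 0 := by nlinarith [sq_nonneg (x 0 + (-20/13 : ℝ) * x 1 + (25/39 : ℝ) * x 2), sq_nonneg (x 1 + (-631/529 : ℝ) * x 2), sq_nonneg (x 2)]
        have hx1 : x 1 = 0 := by linarith
        have hy0 : x 0 + (-20/13 : ℝ) * x 1 + (25/39 : ℝ) * x 2 = 0 := by nlinarith [sq_nonneg (x 0 + (-20/13 : ℝ) * x 1 + (25/39 : ℝ) * x 2), sq_nonneg (x 1 + (-631/529 : ℝ) * x 2), sq_nonneg (x 2)]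
        have hx0 : x 0 = 0 := by linarith
        exact hx (funext fun i => by fin_cases i <;> simp_all)
    · intro E _ _ v
      have h0 : (0:ℝ) ≤ ⟪(-1 : ℝ) • v 0 + (20/13 : ℝ) • v 1 + (-29/39 : ℝ) • v 2 + (8/39 : ℝ) • v 3, (-1 : ℝ) • v 0 + (20/13 : ℝ) • v 1 + (-29/39 : ℝ) • v 2 + (8/39 : ℝ) • v 3⟫ := real_inner_self_nonneg
      have h1 : (0:ℝ) ≤ ⟪(-1 : ℝ) • v 1 + (5/22 : ℝ) • v 2 + (17/22 : ℝ) • v 3, (-1 : ℝ) • v 1 + (5/22 : ℝ) • v 2 + (17/22 : ℝ) • v 3⟫ := real_inner_self_nonneg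
      have h2 : (0:ℝ) ≤ ⟪(-1 : ℝ) • v 2 + (1 : ℝ) • v 3, (-1 : ℝ) • v 2 + (1 : ℝ) • v 3⟫ := real_inner_self_nonneg
      simp only [inner_add_left, inner_add_right, inner_sub_right, real_inner_smul_left,
        real_inner_smul_right, Finset.sum_range_succ, Finset.sum_range_zero, zero_add,
        Fin.sum_univ_three, sum_inner, inner_zero_left] at h0 h1 h2 ⊢
      have cv0 : ((0 : Fin 3) : ℕ) = 0 := rfl
      have cv1 : ((1 : Fin 3) : ℕ) = 1 := rfl
      have cv2 : ((2 : Fin 3) : ℕ) = 2 := rfl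
      norm_num [d0, d1, d2, d3, cv0, cv1, cv2, Matrix.cons_val, Matrix.cons_val_two, Matrix.cons_val_three, Matrix.cons_val_four, Matrix.vecHead, Matrix.vecTail] at h0 h1 h2 ⊢
      have s01 : ⟪v 1, v 0⟫ = ⟪v 0, v 1⟫ := real_inner_comm _ _
      have s02 : ⟪v 2, v 0⟫ = ⟪v 0, v 2⟫ := real_inner_comm _ _
      have s03 : ⟪v 3, v 0⟫ = ⟪v 0, v 3⟫ := real_inner_comm _ _
      have s12 : ⟪v 2, v 1⟫ = ⟪v 1, v 2⟫ := real_inner_comm _ _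
      have s13 : ⟪v 3, v 1⟫ = ⟪v 1, v 3⟫ := real_inner_comm _ _
      have s23 : ⟪v 3, v 2⟫ = ⟪v 2, v 3⟫ := real_inner_comm _ _
      linarith [h0, h1, h2]
  · -- k = 4
    have e0 := hδ 0
    have e1 := hδ 1
    have e2 := hδ 2
    have e3 := hδ 3
    have e4 := hδ 4
    norm_num [Finset.sum_range_succ, Finset.sum_Icc_succ_top, Finset.Icc_self] at e0 e1 e2 e3 e4
    have r0 : (δc 0 * 1 + δc 1 * 0 + δc 2 * 0 + δc 3 * 0 + δc 4 * 0 : ℝ) = 25/12 := by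
      first
      | refine Complex.ofReal_inj.mp ?_; push_cast; linear_combination e0
      | linarith [e0]
    have r1 : (δc 0 * 1 + δc 1 * 1 + δc 2 * 1 + δc 3 * 1 + δc 4 * 1 : ℝ) = 0 := by
      first
      | refine Complex.ofReal_inj.mp ?_; push_cast; linear_combination e1
      | linarith [e1]
    have r2 : (δc 0 * 1 + δc 1 * 2 + δc 2 * 4 + δc 3 * 8 + δc 4 * 16 : ℝ) = -7/12 := by
      first
      | refine Complex.ofReal_inj.mp ?_; push_cast; linear_combination e2
      | linarith [e2]
    have r3 : (δc 0 * 1 + δc 1 * 3 + δc 2 * 9 + δc 3 * 27 + δc 4 * 81 : ℝ) = 4/3 := by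
      first
      | refine Complex.ofReal_inj.mp ?_; push_cast; linear_combination e3
      | linarith [e3]
    have r4 : (δc 0 * 1 + δc 1 * 4 + δc 2 * 16 + δc 3 * 64 + δc 4 * 256 : ℝ) = 51/4 := by
      first
      | refine Complex.ofReal_inj.mp ?_; push_cast; linear_combination e4
      | linarith [e4]
    have d0 : δc 0 = 25/12 := by linarith
    have d1 : δc 1 = -4 := by linarith
    have d2 : δc 2 = 3 := by linarith
    have d3 : δc 3 = -4/3 := by linarith
    have d4 : δc 4 = 1/4 := by linarith
    refine ⟨3/5, by norm_num, by norm_num, Matrix.of ![![47/192, -11/32, 427/960, -19/48], ![-11/32, 217/240, -87/64, 65/64], ![427/960, -87/64, 85/32, -17/8], ![-19/48, 65/64, -17/8, 123/64]], ?_, ?_, ?_⟩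
    · ext i j
      fin_cases i <;> fin_cases j <;> simp [Matrix.transpose_apply] <;> norm_num
    · refine Matrix.PosDef.of_dotProduct_mulVec_pos ?_ ?_
      · ext i j
        fin_cases i <;> fin_cases j <;> simp [Matrix.conjTranspose_apply] <;> norm_num
      · intro x hx
        have hq : dotProduct (star x) ((Matrix.of ![![47/192, -11/32, 427/960, -19/48], ![-11/32, 217/240, -87/64, 65/64], ![427/960, -87/64, 85/32, -17/8], ![-19/48, 65/64, -17/8, 123/64]]).mulVec x)
            = (47/192 : ℝ) * (x 0 + (-66/47 : ℝ) * x 1 + (427/235 : ℝ) * x 2 + (-76/47 : ℝ) * x 3)^2 + (2377/5640 : ℝ) * (x 1 + (-33153/19016 : ℝ) * x 2 + (20745/19016 : ℝ) * x 3)^2 + (51756653/91276800 : ℝ) * (x 2 + (-55147645/51756653 : ℝ) * x 3)^2 + (7062761/51756653 : ℝ) * (x 3)^2 := by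
          simp [dotProduct, Matrix.mulVec, Fin.sum_univ_four]
          ring
        rw [hq]
        by_contra hle
        push_neg at hle
        have hy3 : x 3 = 0 := by nlinarith [sq_nonneg (x 0 + (-66/47 : ℝ) * x 1 + (427/235 : ℝ) * x 2 + (-76/47 : ℝ) * x 3), sq_nonneg (x 1 + (-33153/19016 : ℝ) * x 2 + (20745/19016 : ℝ) * x 3), sq_nonneg (x 2 + (-55147645/51756653 : ℝ) * x 3), sq_nonneg (x 3)]
        have hx3 : x 3 = 0 := by linarith
        have hy2 : x 2 + (-55147645/51756653 : ℝ) * x 3 = 0 := by nlinarith [sq_nonneg (x 0 + (-66/47 : ℝ) * x 1 + (427/235 : ℝ) * x 2 + (-76/47 : ℝ) * x 3), sq_nonneg (x 1 + (-33153/19016 : ℝ) * x 2 + (20745/19016 : ℝ) * x 3), sq_nonneg (x 2 + (-55147645/51756653 : ℝ) * x 3), sq_nonneg (x 3)]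
        have hx2 : x 2 = 0 := by linarith
        have hy1 : x 1 + (-33153/19016 : ℝ) * x 2 + (20745/19016 : ℝ) * x 3 = 0 := by nlinarith [sq_nonneg (x 0 + (-66/47 : ℝ) * x 1 + (427/235 : ℝ) * x 2 + (-76/47 : ℝ) * x 3), sq_nonneg (x 1 + (-33153/19016 : ℝ) * x 2 + (20745/19016 : ℝ) * x 3), sq_nonneg (x 2 + (-55147645/51756653 : ℝ) * x 3), sq_nonneg (x 3)]
        have hx1 : x 1 = 0 := by linarith
        have hy0 : x 0 + (-66/47 : ℝ) * x 1 + (427/235 : ℝ) * x 2 + (-76/47 : ℝ) * x 3 = 0 := by nlinarith [sq_nonneg (x 0 + (-66/47 : ℝ) * x 1 + (427/235 : ℝ) * x 2 + (-76/47 : ℝ) * x 3), sq_nonneg (x 1 + (-33153/19016 : ℝ) * x 2 + (20745/19016 : ℝ) * x 3), sq_nonneg (x 2 + (-55147645/51756653 : ℝ) * x 3), sq_nonneg (x 3)]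
        have hx0 : x 0 = 0 := by linarith
        exact hx (funext fun i => by fin_cases i <;> simp_all)
    · intro E _ _ v
      have h0 : (0:ℝ) ≤ ⟪(-1 : ℝ) • v 0 + (66/47 : ℝ) • v 1 + (-427/235 : ℝ) • v 2 + (452/235 : ℝ) • v 3 + (-24/47 : ℝ) • v 4, (-1 : ℝ) • v 0 + (66/47 : ℝ) • v 1 + (-427/235 : ℝ) • v 2 + (452/235 : ℝ) • v 3 + (-24/47 : ℝ) • v 4⟫ := real_inner_self_nonneg
      have h1 : (0:ℝ) ≤ ⟪(-1 : ℝ) • v 1 + (5881/2657 : ℝ) • v 2 + (-13972/7971 : ℝ) • v 3 + (4300/7971 : ℝ) • v 4, (-1 : ℝ) • v 1 + (5881/2657 : ℝ) • v 2 + (-13972/7971 : ℝ) • v 3 + (4300/7971 : ℝ) • v 4⟫ := real_inner_self_nonneg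
      have h2 : (0:ℝ) ≤ ⟪(-1 : ℝ) • v 2 + (1590411/999826 : ℝ) • v 3 + (-590585/999826 : ℝ) • v 4, (-1 : ℝ) • v 2 + (1590411/999826 : ℝ) • v 3 + (-590585/999826 : ℝ) • v 4⟫ := real_inner_self_nonneg
      have h3 : (0:ℝ) ≤ ⟪(-1 : ℝ) • v 3 + (1 : ℝ) • v 4, (-1 : ℝ) • v 3 + (1 : ℝ) • v 4⟫ := real_inner_self_nonneg
      simp only [inner_add_left, inner_add_right, inner_sub_right, real_inner_smul_left,
        real_inner_smul_right, Finset.sum_range_succ, Finset.sum_range_zero, zero_add,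
        Fin.sum_univ_four, sum_inner, inner_zero_left] at h0 h1 h2 h3 ⊢
      have cv0 : ((0 : Fin 4) : ℕ) = 0 := rfl
      have cv1 : ((1 : Fin 4) : ℕ) = 1 := rfl
      have cv2 : ((2 : Fin 4) : ℕ) = 2 := rfl
      have cv3 : ((3 : Fin 4) : ℕ) = 3 := rfl
      norm_num [d0, d1, d2, d3, d4, cv0, cv1, cv2, cv3, Matrix.cons_val, Matrix.cons_val_two, Matrix.cons_val_three, Matrix.cons_val_four, Matrix.vecHead, Matrix.vecTail] at h0 h1 h2 h3 ⊢
      have s01 : ⟪v 1, v 0⟫ = ⟪v 0, v 1⟫ := real_inner_comm _ _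
      have s02 : ⟪v 2, v 0⟫ = ⟪v 0, v 2⟫ := real_inner_comm _ _
      have s03 : ⟪v 3, v 0⟫ = ⟪v 0, v 3⟫ := real_inner_comm _ _
      have s04 : ⟪v 4, v 0⟫ = ⟪v 0, v 4⟫ := real_inner_comm _ _
      have s12 : ⟪v 2, v 1⟫ = ⟪v 1, v 2⟫ := real_inner_comm _ _
      have s13 : ⟪v 3, v 1⟫ = ⟪v 1, v 3⟫ := real_inner_comm _ _
      have s14 : ⟪v 4, v 1⟫ = ⟪v 1, v 4⟫ := real_inner_comm _ _
      have s23 : ⟪v 3, v 2⟫ = ⟪v 2, v 3⟫ := real_inner_comm _ _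
      have s24 : ⟪v 4, v 2⟫ = ⟪v 2, v 4⟫ := real_inner_comm _ _
      have s34 : ⟪v 4, v 3⟫ = ⟪v 3, v 4⟫ := real_inner_comm _ _
      linarith [h0, h1, h2, h3]
  · -- k = 5
    have e0 := hδ 0
    have e1 := hδ 1
    have e2 := hδ 2
    have e3 := hδ 3
    have e4 := hδ 4
    have e5 := hδ 5
    norm_num [Finset.sum_range_succ, Finset.sum_Icc_succ_top, Finset.Icc_self] at e0 e1 e2 e3 e4 e5
    have r0 : (δc 0 * 1 + δc 1 * 0 + δc 2 * 0 + δc 3 * 0 + δc 4 * 0 + δc 5 * 0 : ℝ) = 137/60 := by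
      first
      | refine Complex.ofReal_inj.mp ?_; push_cast; linear_combination e0
      | linarith [e0]
    have r1 : (δc 0 * 1 + δc 1 * 1 + δc 2 * 1 + δc 3 * 1 + δc 4 * 1 + δc 5 * 1 : ℝ) = 0 := by
      first
      | refine Complex.ofReal_inj.mp ?_; push_cast; linear_combination e1
      | linarith [e1]
    have r2 : (δc 0 * 1 + δc 1 * 2 + δc 2 * 4 + δc 3 * 8 + δc 4 * 16 + δc 5 * 32 : ℝ) = -47/60 := by
      first
      | refine Complex.ofReal_inj.mp ?_; push_cast; linear_combination e2
      | linarith [e2]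
    have r3 : (δc 0 * 1 + δc 1 * 3 + δc 2 * 9 + δc 3 * 27 + δc 4 * 81 + δc 5 * 243 : ℝ) = -76/15 := by
      first
      | refine Complex.ofReal_inj.mp ?_; push_cast; linear_combination e3
      | linarith [e3]
    have r4 : (δc 0 * 1 + δc 1 * 4 + δc 2 * 16 + δc 3 * 64 + δc 4 * 256 + δc 5 * 1024 : ℝ) = -717/20 := by
      first
      | refine Complex.ofReal_inj.mp ?_; push_cast; linear_combination e4
      | linarith [e4]
    have r5 : (δc 0 * 1 + δc 1 * 5 + δc 2 * 25 + δc 3 * 125 + δc 4 * 625 + δc 5 * 3125 : ℝ) = -2372/15 := by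
      first
      | refine Complex.ofReal_inj.mp ?_; push_cast; linear_combination e5
      | linarith [e5]
    have d0 : δc 0 = 137/60 := by linarith
    have d1 : δc 1 = -5 := by linarith
    have d2 : δc 2 = 5 := by linarith
    have d3 : δc 3 = -10/3 := by linarith
    have d4 : δc 4 = 5/4 := by linarith
    have d5 : δc 5 = -1/5 := by linarith
    refine ⟨23/25, by norm_num, by norm_num, Matrix.of ![![1/100, -11/200, 91/750, -187/1500, 169/3000], ![-11/200, 8/25, -371/500, 83/100, -79/200], ![91/750, -371/500, 371/200, -291/125, 237/200], ![-187/1500, 83/100, -291/125, 437/125, -991/500], ![169/3000, -79/200, 237/200, -991/500, 1227/1000]], ?_, ?_, ?_⟩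
    · ext i j
      fin_cases i <;> fin_cases j <;> simp [Matrix.transpose_apply] <;> norm_num
    · refine Matrix.PosDef.of_dotProduct_mulVec_pos ?_ ?_
      · ext i j
        fin_cases i <;> fin_cases j <;> simp [Matrix.conjTranspose_apply] <;> norm_num
      · intro x hx
        have hq : dotProduct (star x) ((Matrix.of ![![1/100, -11/200, 91/750, -187/1500, 169/3000], ![-11/200, 8/25, -371/500, 83/100, -79/200], ![91/750, -371/500, 371/200, -291/125, 237/200], ![-187/1500, 83/100, -291/125, 437/125, -991/500], ![169/3000, -79/200, 237/200, -991/500, 1227/1000]]).mulVec x)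
            = (1/100 : ℝ) * (x 0 + (-11/2 : ℝ) * x 1 + (182/15 : ℝ) * x 2 + (-187/15 : ℝ) * x 3 + (169/30 : ℝ) * x 4)^2 + (7/400 : ℝ) * (x 1 + (-64/15 : ℝ) * x 2 + (866/105 : ℝ) * x 3 + (-73/15 : ℝ) * x 4)^2 + (2891/45000 : ℝ) * (x 2 + (-8980/2891 : ℝ) * x 3 + (6215/2891 : ℝ) * x 4)^2 + (237709/1806875 : ℝ) * (x 3 + (-1071761/950836 : ℝ) * x 4)^2 + (103570239/3327926000 : ℝ) * (x 4)^2 := by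
          simp [dotProduct, Matrix.mulVec, Fin.sum_univ_five]
          ring
        rw [hq]
        by_contra hle
        push_neg at hle
        have hy4 : x 4 = 0 := by nlinarith [sq_nonneg (x 0 + (-11/2 : ℝ) * x 1 + (182/15 : ℝ) * x 2 + (-187/15 : ℝ) * x 3 + (169/30 : ℝ) * x 4), sq_nonneg (x 1 + (-64/15 : ℝ) * x 2 + (866/105 : ℝ) * x 3 + (-73/15 : ℝ) * x 4), sq_nonneg (x 2 + (-8980/2891 : ℝ) * x 3 + (6215/2891 : ℝ) * x 4), sq_nonneg (x 3 + (-1071761/950836 : ℝ) * x 4), sq_nonneg (x 4)]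
        have hx4 : x 4 = 0 := by linarith
        have hy3 : x 3 + (-1071761/950836 : ℝ) * x 4 = 0 := by nlinarith [sq_nonneg (x 0 + (-11/2 : ℝ) * x 1 + (182/15 : ℝ) * x 2 + (-187/15 : ℝ) * x 3 + (169/30 : ℝ) * x 4), sq_nonneg (x 1 + (-64/15 : ℝ) * x 2 + (866/105 : ℝ) * x 3 + (-73/15 : ℝ) * x 4), sq_nonneg (x 2 + (-8980/2891 : ℝ) * x 3 + (6215/2891 : ℝ) * x 4), sq_nonneg (x 3 + (-1071761/950836 : ℝ) * x 4), sq_nonneg (x 4)]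
        have hx3 : x 3 = 0 := by linarith
        have hy2 : x 2 + (-8980/2891 : ℝ) * x 3 + (6215/2891 : ℝ) * x 4 = 0 := by nlinarith [sq_nonneg (x 0 + (-11/2 : ℝ) * x 1 + (182/15 : ℝ) * x 2 + (-187/15 : ℝ) * x 3 + (169/30 : ℝ) * x 4), sq_nonneg (x 1 + (-64/15 : ℝ) * x 2 + (866/105 : ℝ) * x 3 + (-73/15 : ℝ) * x 4), sq_nonneg (x 2 + (-8980/2891 : ℝ) * x 3 + (6215/2891 : ℝ) * x 4), sq_nonneg (x 3 + (-1071761/950836 : ℝ) * x 4), sq_nonneg (x 4)]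
        have hx2 : x 2 = 0 := by linarith
        have hy1 : x 1 + (-64/15 : ℝ) * x 2 + (866/105 : ℝ) * x 3 + (-73/15 : ℝ) * x 4 = 0 := by nlinarith [sq_nonneg (x 0 + (-11/2 : ℝ) * x 1 + (182/15 : ℝ) * x 2 + (-187/15 : ℝ) * x 3 + (169/30 : ℝ) * x 4), sq_nonneg (x 1 + (-64/15 : ℝ) * x 2 + (866/105 : ℝ) * x 3 + (-73/15 : ℝ) * x 4), sq_nonneg (x 2 + (-8980/2891 : ℝ) * x 3 + (6215/2891 : ℝ) * x 4), sq_nonneg (x 3 + (-1071761/950836 : ℝ) * x 4), sq_nonneg (x 4)]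
        have hx1 : x 1 = 0 := by linarith
        have hy0 : x 0 + (-11/2 : ℝ) * x 1 + (182/15 : ℝ) * x 2 + (-187/15 : ℝ) * x 3 + (169/30 : ℝ) * x 4 = 0 := by nlinarith [sq_nonneg (x 0 + (-11/2 : ℝ) * x 1 + (182/15 : ℝ) * x 2 + (-187/15 : ℝ) * x 3 + (169/30 : ℝ) * x 4), sq_nonneg (x 1 + (-64/15 : ℝ) * x 2 + (866/105 : ℝ) * x 3 + (-73/15 : ℝ) * x 4), sq_nonneg (x 2 + (-8980/2891 : ℝ) * x 3 + (6215/2891 : ℝ) * x 4), sq_nonneg (x 3 + (-1071761/950836 : ℝ) * x 4), sq_nonneg (x 4)]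
        have hx0 : x 0 = 0 := by linarith
        exact hx (funext fun i => by fin_cases i <;> simp_all)
    · intro E _ _ v
      have h0 : (0:ℝ) ≤ ⟪(-1 : ℝ) • v 0 + (11/2 : ℝ) • v 1 + (-182/15 : ℝ) • v 2 + (187/15 : ℝ) • v 3 + (-89/6 : ℝ) • v 4 + (10 : ℝ) • v 5, (-1 : ℝ) • v 0 + (11/2 : ℝ) • v 1 + (-182/15 : ℝ) • v 2 + (187/15 : ℝ) • v 3 + (-89/6 : ℝ) • v 4 + (10 : ℝ) • v 5⟫ := real_inner_self_nonneg
      have h1 : (0:ℝ) ≤ ⟪(-1 : ℝ) • v 1 + (118/45 : ℝ) • v 2 + (-46/15 : ℝ) • v 3 + (59/15 : ℝ) • v 4 + (-112/45 : ℝ) • v 5, (-1 : ℝ) • v 1 + (118/45 : ℝ) • v 2 + (-46/15 : ℝ) • v 3 + (59/15 : ℝ) • v 4 + (-112/45 : ℝ) • v 5⟫ := real_inner_self_nonneg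
      have h2 : (0:ℝ) ≤ ⟪(-1 : ℝ) • v 2 + (36/31 : ℝ) • v 3 + (-216/217 : ℝ) • v 4 + (181/217 : ℝ) • v 5, (-1 : ℝ) • v 2 + (36/31 : ℝ) • v 3 + (-216/217 : ℝ) • v 4 + (181/217 : ℝ) • v 5⟫ := real_inner_self_nonneg
      have h3 : (0:ℝ) ≤ ⟪(-1 : ℝ) • v 3 + (364/311 : ℝ) • v 4 + (-53/311 : ℝ) • v 5, (-1 : ℝ) • v 3 + (364/311 : ℝ) • v 4 + (-53/311 : ℝ) • v 5⟫ := real_inner_self_nonneg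
      have h4 : (0:ℝ) ≤ ⟪(-1 : ℝ) • v 4 + (1 : ℝ) • v 5, (-1 : ℝ) • v 4 + (1 : ℝ) • v 5⟫ := real_inner_self_nonneg
      simp only [inner_add_left, inner_add_right, inner_sub_right, real_inner_smul_left,
        real_inner_smul_right, Finset.sum_range_succ, Finset.sum_range_zero, zero_add,
        Fin.sum_univ_five, sum_inner, inner_zero_left] at h0 h1 h2 h3 h4 ⊢
      have cv0 : ((0 : Fin 5) : ℕ) = 0 := rfl
      have cv1 : ((1 : Fin 5) : ℕ) = 1 := rfl
      have cv2 : ((2 : Fin 5) : ℕ) = 2 := rfl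
      have cv3 : ((3 : Fin 5) : ℕ) = 3 := rfl
      have cv4 : ((4 : Fin 5) : ℕ) = 4 := rfl
      norm_num [d0, d1, d2, d3, d4, d5, cv0, cv1, cv2, cv3, cv4, Matrix.cons_val, Matrix.cons_val_two, Matrix.cons_val_three, Matrix.cons_val_four, Matrix.vecHead, Matrix.vecTail] at h0 h1 h2 h3 h4 ⊢
      have s01 : ⟪v 1, v 0⟫ = ⟪v 0, v 1⟫ := real_inner_comm _ _
      have s02 : ⟪v 2, v 0⟫ = ⟪v 0, v 2⟫ := real_inner_comm _ _
      have s03 : ⟪v 3, v 0⟫ = ⟪v 0, v 3⟫ := real_inner_comm _ _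
      have s04 : ⟪v 4, v 0⟫ = ⟪v 0, v 4⟫ := real_inner_comm _ _
      have s05 : ⟪v 5, v 0⟫ = ⟪v 0, v 5⟫ := real_inner_comm _ _
      have s12 : ⟪v 2, v 1⟫ = ⟪v 1, v 2⟫ := real_inner_comm _ _
      have s13 : ⟪v 3, v 1⟫ = ⟪v 1, v 3⟫ := real_inner_comm _ _
      have s14 : ⟪v 4, v 1⟫ = ⟪v 1, v 4⟫ := real_inner_comm _ _
      have s15 : ⟪v 5, v 1⟫ = ⟪v 1, v 5⟫ := real_inner_comm _ _
      have s23 : ⟪v 3, v 2⟫ = ⟪v 2, v 3⟫ := real_inner_comm _ _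
      have s24 : ⟪v 4, v 2⟫ = ⟪v 2, v 4⟫ := real_inner_comm _ _
      have s25 : ⟪v 5, v 2⟫ = ⟪v 2, v 5⟫ := real_inner_comm _ _
      have s34 : ⟪v 4, v 3⟫ = ⟪v 3, v 4⟫ := real_inner_comm _ _
      have s35 : ⟪v 5, v 3⟫ = ⟪v 3, v 5⟫ := real_inner_comm _ _
      have s45 : ⟪v 5, v 4⟫ = ⟪v 4, v 5⟫ := real_inner_comm _ _
      linarith [h0, h1, h2, h3, h4]
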